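/- Let β be a type, T : β → β → Prop a transition relation and R : Set β. For P : Set β define the monotone operator Φ_P : Set β → Set β by Φ_P Y = {x | (x ∈ R ∧ ∃ y, T x y ∧ y ∈ P) ∨ (∃ y, T x y ∧ y ∈ Y)}, and define the monotone operator Ψ : Set β → Set β by Ψ P = lfp Φ_P. Then for every n : ℕ and every x : β, x ∈ Ψ^[n] Set.univ if and only if there exist k : ℕ and p : ℕ → β with p 0 = x, T (p i) (p (i+1)) for all i < k, and at least n indices i < k satisfy p i ∈ R; i.e., in the n-th iteration of the outer fixpoint, x belongs to the computed set iff x has a finite path that goes at least n times through vertices with property R. -/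

import Mathlib

/-- The inner operator `Φ_P Y = {x | (x ∈ R ∧ ∃ y, T x y ∧ y ∈ P) ∨ (∃ y, T x y ∧ y ∈ Y)}`,
bundled with its monotonicity. -/
def PhiHom {β : Type*} (T : β → β → Prop) (R P : Set β) : Set β →o Set β :=
  ⟨fun Y => {x | (x ∈ R ∧ ∃ y, T x y ∧ y ∈ P) ∨ (∃ y, T x y ∧ y ∈ Y)},
   fun _Y _Z hYZ _x hx => hx.imp id (fun ⟨y, hTy, hy⟩ => ⟨y, hTy, hYZ hy⟩)⟩

/-- The outer operator `Ψ P = lfp Φ_P`, bundled with its monotonicity. -/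
def PsiHom {β : Type*} (T : β → β → Prop) (R : Set β) : Set β →o Set β :=
  ⟨fun P => OrderHom.lfp (PhiHom T R P),
   fun _P _P' hPP' => OrderHom.lfp.monotone
     (fun _Y _x hx => hx.imp (fun ⟨hR, y, hT, hy⟩ => ⟨hR, y, hT, hPP' hy⟩) id)⟩

lemma mem_lfp_phi_iff {β : Type*} (T : β → β → Prop) (R P : Set β) (x : β) :
    x ∈ OrderHom.lfp (PhiHom T R P) ↔
      ∃ (m : ℕ) (q : ℕ → β), q 0 = x ∧ (∀ i < m, T (q i) (q (i + 1))) ∧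
        q m ∈ R ∧ ∃ y, T (q m) y ∧ y ∈ P := by
  constructor
  · intro hx
    have hle : OrderHom.lfp (PhiHom T R P) ≤
        {x | ∃ (m : ℕ) (q : ℕ → β), q 0 = x ∧ (∀ i < m, T (q i) (q (i + 1))) ∧
          q m ∈ R ∧ ∃ y, T (q m) y ∧ y ∈ P} := by
      apply OrderHom.lfp_le
      rintro z (⟨hR, y, hT, hP⟩ | ⟨y, hT, m, q, hq0, hstep, hR, y', hT', hP'⟩)
      · exact ⟨0, fun _ => z, rfl, by omega, hR, y, hT, hP⟩
      · refine ⟨m + 1, fun i => match i with | 0 => z | j + 1 => q j, rfl, ?_, ?_, y', ?_, hP'⟩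
        · rintro (_ | j) hj
          · simpa [hq0] using hT
          · exact hstep j (by omega)
        · exact hR
        · exact hT'
    exact hle hx
  · rintro ⟨m, q, rfl, hstep, hR, y, hT, hP⟩
    induction m generalizing q with
    | zero =>
      rw [← OrderHom.map_lfp (PhiHom T R P)]
      exact Or.inl ⟨hR, y, hT, hP⟩
    | succ m ih =>
      rw [← OrderHom.map_lfp (PhiHom T R P)]
      refine Or.inr ⟨q 1, hstep 0 (by omega), ?_⟩
      exact ih (fun i => q (i + 1)) (fun i hi => hstep (i + 1) (by omega)) hR hT

theorem psi_iterate_iff_path_through_R {β : Type*} (T : β → β → Prop) (R : Set β)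
    (n : ℕ) (x : β) :
    x ∈ (⇑(PsiHom T R))^[n] Set.univ ↔
      ∃ (k : ℕ) (p : ℕ → β), p 0 = x ∧ (∀ i < k, T (p i) (p (i + 1))) ∧
        n ≤ {i | i < k ∧ p i ∈ R}.ncard := by
  induction n generalizing x with
  | zero =>
    simp only [Function.iterate_zero, id_eq, Set.mem_univ, true_iff]
    exact ⟨0, fun _ => x, rfl, by omega, by omega⟩
  | succ n ih =>
    rw [Function.iterate_succ_apply']
    show x ∈ OrderHom.lfp (PhiHom T R _) ↔ _
    rw [mem_lfp_phi_iff]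
    constructor
    · rintro ⟨m, q, rfl, hstep, hR, y, hT, hy⟩
      obtain ⟨k', p', hp0, hstep', hcard'⟩ := (ih _).mp hy
      set p : ℕ → β := fun i => if i ≤ m then q i else p' (i - (m + 1)) with hp
      refine ⟨m + 1 + k', p, by simp [hp], ?_, ?_⟩
      · intro i hi
        rcases lt_trichotomy i m with h | rfl | h
        · have : p i = q i := by simp [hp, h.le]
          have h2 : p (i + 1) = q (i + 1) := by simp [hp]; omega
          rw [this, h2]; exact hstep i h
        · have : p i = q i := by simp [hp]
          have h2 : p (i + 1) = p' 0 := by simp [hp]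
          rw [this, h2, hp0]; exact hT
        · have : p i = p' (i - (m + 1)) := by simp [hp]; omega
          have h2 : p (i + 1) = p' (i - (m + 1) + 1) := by
            simp only [hp]; rw [if_neg (by omega)]; congr 1; omega
          rw [this, h2]; exact hstep' _ (by omega)
      · set S' : Set ℕ := {i | i < k' ∧ p' i ∈ R}
        set S : Set ℕ := {i | i < m + 1 + k' ∧ p i ∈ R}
        have hS'fin : S'.Finite := (Set.finite_Iio k').subset (fun i hi => hi.1)
        have hSfin : S.Finite := (Set.finite_Iio (m + 1 + k')).subset (fun i hi => hi.1)
        have hsub : insert m ((fun j => j + (m + 1)) '' S') ⊆ S := by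
          rintro i (rfl | ⟨j, hj, hji⟩)
          · refine ⟨by omega, ?_⟩
            have : p i = q i := by simp [hp]
            rwa [this]
          · simp only at hji
            subst hji
            refine ⟨by have := hj.1; omega, ?_⟩
            have : p (j + (m + 1)) = p' j := by
              simp only [hp]; rw [if_neg (by omega)]; congr 1; omega
            rw [this]; exact hj.2
        have hnm : m ∉ (fun j => j + (m + 1)) '' S' := by
          rintro ⟨j, _, hj⟩; simp only at hj; omega
        have himg : ((fun j => j + (m + 1)) '' S').ncard = S'.ncard :=
          Set.ncard_image_of_injective _ (add_left_injective _)
        have h1 : (insert m ((fun j => j + (m + 1)) '' S')).ncard = S'.ncard + 1 := by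
          rw [Set.ncard_insert_of_notMem hnm (hS'fin.image _), himg]
        have h2 := Set.ncard_le_ncard hsub hSfin
        omega
    · rintro ⟨k, p, rfl, hstep, hcard⟩
      set S : Set ℕ := {i | i < k ∧ p i ∈ R} with hS
      have hSfin : S.Finite := (Set.finite_Iio k).subset (fun i hi => hi.1)
      have hne : S.Nonempty := by
        rcases S.eq_empty_or_nonempty with h | h
        · rw [h] at hcard; simp at hcard
        · exact h
      set m := sInf S with hm
      have hmS : m ∈ S := Nat.sInf_mem hne
      refine ⟨m, p, rfl, fun i hi => hstep i (by have := hmS.1; omega), hmS.2,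
        p (m + 1), hstep m hmS.1, ?_⟩
      apply (ih _).mpr
      refine ⟨k - (m + 1), fun i => p (m + 1 + i), rfl, ?_, ?_⟩
      · intro i hi
        dsimp only
        have : m + 1 + (i + 1) = m + 1 + i + 1 := by omega
        rw [this]
        exact hstep _ (by omega)
      · set S'' : Set ℕ := {i | i < k - (m + 1) ∧ p (m + 1 + i) ∈ R}
        have hS''fin : S''.Finite := (Set.finite_Iio (k - (m + 1))).subset (fun i hi => hi.1)
        have hgt : ∀ j ∈ S \ {m}, m + 1 ≤ j := by
          rintro j ⟨hj, hjm⟩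
          have := Nat.sInf_le hj
          simp only [Set.mem_singleton_iff] at hjm
          omega
        have hmt : ∀ j ∈ S \ {m}, j - (m + 1) ∈ S'' := by
          intro j hj
          have h1 := hgt j hj
          refine ⟨by have := hj.1.1; omega, ?_⟩
          have : m + 1 + (j - (m + 1)) = j := by omega
          rw [this]; exact hj.1.2
        have hinj : Set.InjOn (fun j => j - (m + 1)) (S \ {m}) := by
          intro a ha b hb hab
          have := hgt a ha; have := hgt b hb
          simp only at hab; omega
        have hle := Set.ncard_le_ncard_of_injOn _ hmt hinj hS''fin
        have hdiff : (S \ {m}).ncard = S.ncard - 1 :=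
          Set.ncard_diff_singleton_of_mem hmS
        omega
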